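/- Let n ≥ 1, let S be a symmetric positive definite real n×n matrix, and let C ⊆ ℝⁿ be a nonempty closed convex set with 0 ∈ C. Then for all u, z ∈ ℝⁿ, sup_{q ∈ C} ( ⟨q, u⟩ − ¼ ⟨S⁻¹(S z + q), S z + q⟩ ) ≥ ψ(u) − ½ ⟨S z, z⟩. -/

import Mathlib

open Matrix
open scoped RealInnerProductSpace

lemma posdef_inner_pos {n : ℕ} {A : Matrix (Fin n) (Fin n) ℝ} (hA : A.PosDef)
    {x : EuclideanSpace ℝ (Fin n)} (hx : x ≠ 0) :
    0 < ⟪Matrix.toEuclideanLin A x, x⟫ := by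
  have hx' : (WithLp.equiv 2 (Fin n → ℝ)) x ≠ 0 := by
    intro h
    exact hx ((WithLp.equiv 2 (Fin n → ℝ)).injective (by simpa using h))
  have := hA.re_dotProduct_pos hx'
  simp only [RCLike.re_to_real] at this
  rw [dotProduct_comm] at this
  rw [real_inner_comm, EuclideanSpace.inner_eq_star_dotProduct]
  simpa [Matrix.toEuclideanLin_apply] using this

lemma posdef_mu {n : ℕ} (hn : 1 ≤ n) {A : Matrix (Fin n) (Fin n) ℝ} (hA : A.PosDef) :
    ∃ μ : ℝ, 0 < μ ∧ ∀ x : EuclideanSpace ℝ (Fin n),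
      μ * ‖x‖ ^ 2 ≤ ⟪Matrix.toEuclideanLin A x, x⟫ := by
  haveI : Nonempty (Fin n) := ⟨⟨0, hn⟩⟩
  haveI : Nontrivial (EuclideanSpace ℝ (Fin n)) := inferInstance
  set T := Matrix.toEuclideanLin A with hT
  have hcont : Continuous fun x : EuclideanSpace ℝ (Fin n) => ⟪T x, x⟫ :=
    (T.toContinuousLinearMap.continuous).inner continuous_id
  have hs : (Metric.sphere (0 : EuclideanSpace ℝ (Fin n)) 1).Nonempty :=
    NormedSpace.sphere_nonempty.2 zero_le_one
  obtain ⟨x₀, hx₀s, hmin⟩ := (isCompact_sphere (0 : EuclideanSpace ℝ (Fin n)) 1).exists_isMinOn hs hcont.continuousOn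
  have hx₀norm : ‖x₀‖ = 1 := by simpa using hx₀s
  have hx₀ne : x₀ ≠ 0 := by intro h; rw [h] at hx₀norm; simp at hx₀norm
  refine ⟨⟪T x₀, x₀⟫, posdef_inner_pos hA hx₀ne, fun x => ?_⟩
  rcases eq_or_ne x 0 with rfl | hx
  · simp
  · have hxn : (0:ℝ) < ‖x‖ := norm_pos_iff.2 hx
    have hy : (‖x‖⁻¹ • x) ∈ Metric.sphere (0 : EuclideanSpace ℝ (Fin n)) 1 := by
      simp [norm_smul, abs_of_pos (inv_pos.2 hxn), inv_mul_cancel₀ hxn.ne']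
    have h2 : ⟪T x₀, x₀⟫ ≤ ‖x‖⁻¹ * (‖x‖⁻¹ * ⟪T x, x⟫) := by
      have h1 := hmin hy
      simp only [Set.mem_setOf_eq] at h1
      rw [_root_.map_smul, real_inner_smul_left, real_inner_smul_right] at h1
      exact h1
    have key : ‖x‖⁻¹ ^ 2 * ‖x‖ ^ 2 = 1 := by
      rw [← mul_pow, inv_mul_cancel₀ hxn.ne', one_pow]
    calc ⟪T x₀, x₀⟫ * ‖x‖ ^ 2 ≤ (‖x‖⁻¹ * (‖x‖⁻¹ * ⟪T x, x⟫)) * ‖x‖ ^ 2 :=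
          mul_le_mul_of_nonneg_right h2 (sq_nonneg _)
      _ = (‖x‖⁻¹ ^ 2 * ‖x‖ ^ 2) * ⟪T x, x⟫ := by ring
      _ = ⟪T x, x⟫ := by rw [key, one_mul]


lemma toEuclideanLin_mul_apply {n : ℕ} (A B : Matrix (Fin n) (Fin n) ℝ)
    (x : EuclideanSpace ℝ (Fin n)) :
    Matrix.toEuclideanLin (A * B) x = Matrix.toEuclideanLin A (Matrix.toEuclideanLin B x) := by
  simp [Matrix.toEuclideanLin_apply, Matrix.mulVec_mulVec]

lemma toEuclideanLin_one_apply {n : ℕ} (x : EuclideanSpace ℝ (Fin n)) :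
    Matrix.toEuclideanLin (1 : Matrix (Fin n) (Fin n) ℝ) x = x := by
  simp [Matrix.toEuclideanLin_apply]

/-- The support function `h(z) = sup_{q ∈ C} ⟨q, z⟩`, with values in `[0, +∞]` (extended reals). -/
noncomputable def hsupp {n : ℕ} (C : Set (EuclideanSpace ℝ (Fin n)))
    (z : EuclideanSpace ℝ (Fin n)) : EReal :=
  ⨆ q ∈ C, ((⟪q, z⟫ : ℝ) : EReal)

/-- The infimal convolution
`ψ(z) = inf_{z'} { ½ ⟨S(z - z'), z - z'⟩ + h(z') }`. -/
noncomputable def psi {n : ℕ} (S : Matrix (Fin n) (Fin n) ℝ)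
    (C : Set (EuclideanSpace ℝ (Fin n))) (z : EuclideanSpace ℝ (Fin n)) : EReal :=
  ⨅ z' : EuclideanSpace ℝ (Fin n),
    (((2⁻¹ * ⟪Matrix.toEuclideanLin S (z - z'), z - z'⟫ : ℝ) : EReal) + hsupp C z')

set_option maxHeartbeats 1000000 in
theorem stmt19 {n : ℕ} (hn : 1 ≤ n) (S : Matrix (Fin n) (Fin n) ℝ) (hS : S.PosDef)
    (C : Set (EuclideanSpace ℝ (Fin n))) (hCne : C.Nonempty) (hCcl : IsClosed C)
    (hCco : Convex ℝ C) (hC0 : (0 : EuclideanSpace ℝ (Fin n)) ∈ C)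
    (u z : EuclideanSpace ℝ (Fin n)) :
    psi S C u - ((2⁻¹ * ⟪Matrix.toEuclideanLin S z, z⟫ : ℝ) : EReal) ≤
      ⨆ q ∈ C,
        ((⟪q, u⟫ - 4⁻¹ * ⟪Matrix.toEuclideanLin S⁻¹ (Matrix.toEuclideanLin S z + q),
            Matrix.toEuclideanLin S z + q⟫ : ℝ) : EReal) := by
  classical
  set T := Matrix.toEuclideanLin S with hT
  set Ti := Matrix.toEuclideanLin S⁻¹ with hTi
  have hTsym : ∀ x y : EuclideanSpace ℝ (Fin n), ⟪T x, y⟫ = ⟪x, T y⟫ :=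
    Matrix.isHermitian_iff_isSymmetric.1 hS.isHermitian
  have hTisym : ∀ x y : EuclideanSpace ℝ (Fin n), ⟪Ti x, y⟫ = ⟪x, Ti y⟫ :=
    Matrix.isHermitian_iff_isSymmetric.1 hS.inv.isHermitian
  have hTiT : ∀ x : EuclideanSpace ℝ (Fin n), Ti (T x) = x := by
    intro x
    rw [hT, hTi, ← toEuclideanLin_mul_apply, Matrix.nonsing_inv_mul S hS.det_pos.ne'.isUnit,
      toEuclideanLin_one_apply]
  have hTTi : ∀ x : EuclideanSpace ℝ (Fin n), T (Ti x) = x := by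
    intro x
    rw [hT, hTi, ← toEuclideanLin_mul_apply, Matrix.mul_nonsing_inv S hS.det_pos.ne'.isUnit,
      toEuclideanLin_one_apply]
  obtain ⟨μ, hμpos, hμle⟩ := posdef_mu hn hS.inv
  obtain ⟨g, hg⟩ : ∃ g : EuclideanSpace ℝ (Fin n) → ℝ,
      g = fun q => ⟪q, u⟫ - 4⁻¹ * ⟪Ti (T z + q), T z + q⟫ := ⟨_, rfl⟩
  have hgcont : Continuous g := by
    rw [hg]
    apply Continuous.sub
    · exact continuous_id.inner continuous_const
    · exact continuous_const.mul
        ((Ti.toContinuousLinearMap.continuous.comp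
          (continuous_const.add continuous_id)).inner (continuous_const.add continuous_id))
  -- coercivity
  obtain ⟨c, hc⟩ : ∃ c : ℝ, c = ‖T z‖ := ⟨_, rfl⟩
  obtain ⟨K, hK⟩ : ∃ K : ℝ, K = |g 0| + 1 := ⟨_, rfl⟩
  obtain ⟨R, hR⟩ : ∃ R : ℝ, R = max (max (2 * c) 1) (16 * (‖u‖ + K) / μ) := ⟨_, rfl⟩
  have hR1 : (1:ℝ) ≤ R := hR ▸ le_trans (le_max_right _ _) (le_max_left _ _)
  have hcoer : ∀ q : EuclideanSpace ℝ (Fin n), R < ‖q‖ → g q < g 0 := by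
    intro q hq
    have hgq : g q = ⟪q, u⟫ - 4⁻¹ * ⟪Ti (T z + q), T z + q⟫ := by rw [hg]
    have hA1 : ⟪q, u⟫ ≤ ‖q‖ * ‖u‖ := real_inner_le_norm q u
    have hA2 : μ * ‖T z + q‖ ^ 2 ≤ ⟪Ti (T z + q), T z + q⟫ := hμle _
    have hA3 : ‖q‖ ≤ ‖T z + q‖ + c := by
      rw [hc]
      have h := norm_sub_le (T z + q) (T z)
      simpa [add_sub_cancel_left] using h
    have hc0 : (0:ℝ) ≤ c := hc ▸ norm_nonneg _
    have hRa : 2 * c < ‖q‖ :=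
      lt_of_le_of_lt (hR ▸ le_trans (le_max_left _ _) (le_max_left _ _) : 2 * c ≤ R) hq
    have hRb : (1:ℝ) ≤ ‖q‖ := le_of_lt (lt_of_le_of_lt hR1 hq)
    have hRc : 16 * (‖u‖ + K) < μ * ‖q‖ := by
      have h := lt_of_le_of_lt (hR ▸ le_max_right (max (2*c) 1) (16 * (‖u‖ + K) / μ) :
        16 * (‖u‖ + K) / μ ≤ R) hq
      rw [div_lt_iff₀ hμpos] at h
      linarith [h]
    have h5 : ‖q‖ / 2 ≤ ‖q‖ - c := by linarith
    have h6 : (‖q‖ / 2) ^ 2 ≤ ‖T z + q‖ ^ 2 := by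
      have h50 : (0:ℝ) ≤ ‖q‖ / 2 := by linarith
      have h51 : ‖q‖ / 2 ≤ ‖T z + q‖ := by linarith
      nlinarith [h50, h51]
    have habs : -|g 0| ≤ g 0 := neg_abs_le _
    have hKdef : K = |g 0| + 1 := hK
    have hKpos : (0:ℝ) < K := by rw [hKdef]; positivity
    have t1 : 4⁻¹ * (μ * (‖q‖ / 2) ^ 2) ≤ 4⁻¹ * (μ * ‖T z + q‖ ^ 2) := by
      nlinarith [h6, hμpos.le]
    have t3 : 16 * (‖u‖ + K) * ‖q‖ < (μ * ‖q‖) * ‖q‖ :=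
      mul_lt_mul_of_pos_right hRc (by linarith)
    have t5 : g q ≤ ‖q‖ * ‖u‖ - 4⁻¹ * (μ * (‖q‖ / 2) ^ 2) := by
      rw [hgq]; linarith
    have t6 : ‖q‖ * ‖u‖ - 4⁻¹ * (μ * (‖q‖ / 2) ^ 2) < ‖q‖ * ‖u‖ - (‖u‖ + K) * ‖q‖ := by
      linarith [t3]
    have t8 : ‖q‖ * ‖u‖ - (‖u‖ + K) * ‖q‖ = -(K * ‖q‖) := by ring
    have t9 : (0:ℝ) ≤ K * (‖q‖ - 1) := mul_nonneg hKpos.le (by linarith)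
    linarith [t5, t6, t8, t9, habs, hKdef]
  -- maximizer
  have hKB : IsCompact (C ∩ Metric.closedBall (0 : EuclideanSpace ℝ (Fin n)) R) :=
    (isCompact_closedBall _ _).inter_left hCcl
  have hKBne : (C ∩ Metric.closedBall (0 : EuclideanSpace ℝ (Fin n)) R).Nonempty :=
    ⟨0, hC0, by simpa using le_trans zero_le_one hR1⟩
  obtain ⟨qs, hqsmem, hqsmax⟩ := hKB.exists_isMaxOn hKBne hgcont.continuousOn
  have hqsC : qs ∈ C := hqsmem.1
  have hmax : ∀ p ∈ C, g p ≤ g qs := by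
    intro p hp
    rcases le_or_gt ‖p‖ R with h | h
    · exact hqsmax ⟨hp, by simpa using h⟩
    · exact le_trans (hcoer p h).le (hqsmax ⟨hC0, by simpa using le_trans zero_le_one hR1⟩)
  -- optimality
  set r0 : EuclideanSpace ℝ (Fin n) := T z + qs with hr0
  set v : EuclideanSpace ℝ (Fin n) := u - (2⁻¹ : ℝ) • Ti r0 with hv
  have hopt : ∀ p ∈ C, ⟪p - qs, v⟫ ≤ 0 := by
    intro p hp
    set d : EuclideanSpace ℝ (Fin n) := p - qs with hd
    have hmem : ∀ t : ℝ, 0 < t → t ≤ 1 → qs + t • d ∈ C := by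
      intro t ht ht1
      have h := hCco hqsC hp (by linarith : (0:ℝ) ≤ 1 - t) ht.le (by ring)
      have he : (1 - t) • qs + t • p = qs + t • d := by
        rw [hd]; module
      rwa [he] at h
    have hexp : ∀ t : ℝ,
        g (qs + t • d) = g qs + t * ⟪d, v⟫ - t ^ 2 * (4⁻¹ * ⟪Ti d, d⟫) := by
      intro t
      have e1 : T z + (qs + t • d) = r0 + t • d := by rw [hr0]; abel
      have s1 : ⟪Ti d, r0⟫ = ⟪Ti r0, d⟫ := (hTisym d r0).trans (real_inner_comm _ _)
      have s2 : ⟪d, v⟫ = ⟪d, u⟫ - 2⁻¹ * ⟪d, Ti r0⟫ := by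
        rw [hv, inner_sub_right, real_inner_smul_right]
      have e0 : T z + qs = r0 := hr0.symm
      have s3 : ⟪d, Ti r0⟫ = ⟪Ti r0, d⟫ := real_inner_comm _ _
      rw [hg]
      simp only [e1, e0, map_add, _root_.map_smul, inner_add_left, inner_add_right,
        real_inner_smul_left, real_inner_smul_right, s2]
      rw [s1, s3]
      ring
    have hquad : 0 ≤ ⟪Ti d, d⟫ := le_trans (by positivity) (hμle d)
    by_contra hlt
    push_neg at hlt
    set ε : ℝ := ⟪d, v⟫ with hε
    set cc : ℝ := 4⁻¹ * ⟪Ti d, d⟫ with hcc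
    have hcc0 : 0 ≤ cc := by rw [hcc]; linarith
    have ht0 : 0 < min 1 (ε / (2 * (cc + 1))) := by
      apply lt_min one_pos
      positivity
    have ht1 : min 1 (ε / (2 * (cc + 1))) ≤ 1 := min_le_left _ _
    set t : ℝ := min 1 (ε / (2 * (cc + 1))) with htdef
    have hle : g (qs + t • d) ≤ g qs := hmax _ (hmem t ht0 ht1)
    rw [hexp t] at hle
    have h1 : t * ε ≤ t ^ 2 * cc := by linarith
    have h2 : ε ≤ t * cc := by
      have := (mul_le_mul_iff_right₀ ht0).1 (by nlinarith : t * ε ≤ t * (t * cc))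
      linarith
    have h3 : t ≤ ε / (2 * (cc + 1)) := min_le_right _ _
    have h4 : t * cc < ε := by
      have h2c : (0:ℝ) < 2 * (cc + 1) := by linarith
      have hchain : t * cc ≤ (ε / (2 * (cc + 1))) * cc := mul_le_mul_of_nonneg_right h3 hcc0
      have hlast : (ε / (2 * (cc + 1))) * cc < ε := by
        rw [div_mul_eq_mul_div, div_lt_iff₀ h2c]
        nlinarith [mul_pos hlt (show (0:ℝ) < cc + 2 by linarith)]
      linarith
    linarith
  -- support function value at v
  have hsuppv : hsupp C v = ((⟪qs, v⟫ : ℝ) : EReal) := by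
    apply le_antisymm
    · refine iSup₂_le fun p hp => ?_
      have := hopt p hp
      rw [inner_sub_left] at this
      exact EReal.coe_le_coe_iff.2 (by linarith)
    · exact le_iSup₂ (f := fun q (_ : q ∈ C) => ((⟪q, v⟫ : ℝ) : EReal)) qs hqsC
  -- psi bound
  obtain ⟨A, hA⟩ : ∃ A : ℝ, A = 2⁻¹ * ⟪T (u - v), u - v⟫ + ⟪qs, v⟫ := ⟨_, rfl⟩
  have hpsiA : psi S C u ≤ ((A : ℝ) : EReal) := by
    refine le_trans (iInf_le _ v) ?_
    rw [hsuppv, ← EReal.coe_add, hA]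
  -- real algebra
  have halg : A ≤ g qs + 2⁻¹ * ⟪T z, z⟫ := by
    have huv : u - v = (2⁻¹ : ℝ) • Ti r0 := by rw [hv]; exact sub_sub_cancel _ _
    have e2 : T (Ti r0) = r0 := hTTi r0
    have ccom : ⟪r0, Ti r0⟫ = ⟪Ti r0, r0⟫ := real_inner_comm _ _
    have hAexp : A = 8⁻¹ * ⟪Ti r0, r0⟫ + ⟪qs, u⟫ - 2⁻¹ * ⟪qs, Ti r0⟫ := by
      rw [hA, huv, hv]
      simp only [_root_.map_smul, e2, real_inner_smul_left, real_inner_smul_right,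
        inner_sub_right]
      rw [ccom]; ring
    have hgqs : g qs = ⟪qs, u⟫ - 4⁻¹ * ⟪Ti r0, r0⟫ := by
      simp only [hg, ← hr0]
    have hqs_eq : qs = r0 - T z := by rw [hr0]; abel
    have cz : ⟪T z, Ti r0⟫ = ⟪z, r0⟫ := by
      rw [← hTisym (T z) r0, hTiT]
    have x2 : ⟪qs, Ti r0⟫ = ⟪Ti r0, r0⟫ - ⟪z, r0⟫ := by
      rw [hqs_eq, inner_sub_left, cz, real_inner_comm r0 (Ti r0)]
    have key : 0 ≤ ⟪Ti (r0 - (2:ℝ) • T z), r0 - (2:ℝ) • T z⟫ :=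
      le_trans (by positivity) (hμle _)
    have c1 : ⟪Ti r0, T z⟫ = ⟪z, r0⟫ := by
      rw [hTisym r0 (T z), hTiT, real_inner_comm]
    have c2 : ⟪z, T z⟫ = ⟪T z, z⟫ := real_inner_comm _ _
    have x1 : ⟪Ti (r0 - (2:ℝ) • T z), r0 - (2:ℝ) • T z⟫ =
        ⟪Ti r0, r0⟫ - 4 * ⟪z, r0⟫ + 4 * ⟪T z, z⟫ := by
      simp only [map_sub, _root_.map_smul, inner_sub_left, inner_sub_right,
        real_inner_smul_left, real_inner_smul_right, hTiT]
      rw [c1, c2]; ring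
    linarith [key, x1, x2, hAexp, hgqs]
  -- conclude
  have hfin : ((A : ℝ) : EReal) - ((2⁻¹ * ⟪T z, z⟫ : ℝ) : EReal) ≤ ((g qs : ℝ) : EReal) := by
    rw [← EReal.coe_sub]
    exact EReal.coe_le_coe_iff.2 (by linarith)
  refine le_trans (le_trans (EReal.sub_le_sub hpsiA le_rfl) hfin) ?_
  rw [hg]
  exact le_iSup₂ (f := fun q (_ : q ∈ C) =>
    ((⟪q, u⟫ - 4⁻¹ * ⟪Ti (T z + q), T z + q⟫ : ℝ) : EReal)) qs hqsC
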